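/- Given single-piece existential rules R1: B1 → H1 and R2: B2 → H2 with disjoint variables, and a piece-unifier μ = (B2', H1', u) of B2 with R1 in which some frontier variable of R2 is unified with an existential variable of R1, the existential composition R2 ∘_μ R1 = u(B1) ∪ u(B2 \ B2') → ∃ u(H1) ∪ u(H2) (existentially quantifying the images of existential variables) is logically entailed by {R1, R2}. -/
import Mathlib


open scoped Classical
noncomputable section

namespace ER

/-- Terms: constants or variables (variables occurring in instances are called nulls). -/
inductive Term where
  | const : ℕ → Term
  | var : ℕ → Term
deriving DecidableEq

def Term.isConst : Term → Prop
  | .const _ => True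
  | .var _ => False

/-- An atom `p(t₁,…,tₙ)`. -/
structure Atom where
  pred : ℕ
  args : List Term
deriving DecidableEq

def Atom.terms (a : Atom) : Set Term := {t | t ∈ a.args}
def Atom.vars (a : Atom) : Set ℕ := {v | Term.var v ∈ a.args}

def termsOf (S : Set Atom) : Set Term := ⋃ a ∈ S, a.terms
def varsOf (S : Set Atom) : Set ℕ := ⋃ a ∈ S, a.vars
/-- The nulls (non-constant terms) occurring in a set of atoms. -/
def nullsOf (S : Set Atom) : Set Term := {t | t ∈ termsOf S ∧ ¬ t.isConst}

def Term.subst (σ : ℕ → Term) : Term → Term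
  | .const c => .const c
  | .var v => σ v

def Atom.subst (σ : ℕ → Term) (a : Atom) : Atom := ⟨a.pred, a.args.map (Term.subst σ)⟩
def substSet (σ : ℕ → Term) (S : Set Atom) : Set Atom := (Atom.subst σ) '' S

/-- A homomorphism from `S1` to `S2`: a substitution of variables by terms mapping `S1` into `S2`. -/
def isHom (σ : ℕ → Term) (S1 S2 : Set Atom) : Prop := substSet σ S1 ⊆ S2

/-- An injective homomorphism (injective on the terms of the source). -/
def isInjHom (σ : ℕ → Term) (S1 S2 : Set Atom) : Prop :=
  isHom σ S1 S2 ∧ Set.InjOn (Term.subst σ) (termsOf S1)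

/-- An instance is a finite set of ground atoms. -/
def IsInstance (I : Set Atom) : Prop := I.Finite ∧ ∀ t ∈ termsOf I, t.isConst

/-- An existential rule, given by its body and head. -/
structure Rule where
  body : Set Atom
  head : Set Atom

def Rule.frontier (R : Rule) : Set ℕ := varsOf R.body ∩ varsOf R.head
def Rule.exist (R : Rule) : Set ℕ := varsOf R.head \ varsOf R.body

/-- Well-formed rule: finite non-empty body and head, no constants. -/
def WfRule (R : Rule) : Prop :=
  R.body.Finite ∧ R.head.Finite ∧ R.body.Nonempty ∧ R.head.Nonempty ∧
  ∀ t ∈ termsOf (R.body ∪ R.head), ¬ t.isConst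

def WfList (L : List Rule) : Prop := ∀ R ∈ L, WfRule R

/-- Restriction of a substitution to a set of variables (default value elsewhere). -/
def restrict (f : ℕ → Term) (F : Set ℕ) : ℕ → Term :=
  fun v => if v ∈ F then f v else Term.const 0

/-- A semi-oblivious naming of nulls for the rules of `L`: the null created for an
existential variable depends only on the rule and the restriction of the trigger to the
frontier, and distinct such data yield distinct nulls. -/
def SONaming (L : List Rule) (ν : Rule → (ℕ → Term) → ℕ → ℕ) : Prop :=
  (∀ R ∈ L, ∀ f g : ℕ → Term,
      restrict f R.frontier = restrict g R.frontier → ν R f = ν R g) ∧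
  (∀ R ∈ L, ∀ R' ∈ L, ∀ f f' x x', ν R f x = ν R' f' x' →
      R = R' ∧ restrict f R.frontier = restrict f' R'.frontier ∧ x = x')

/-- The safe extension of a trigger `π`, replacing each existential variable by its null. -/
def safeSub (ν : Rule → (ℕ → Term) → ℕ → ℕ) (R : Rule) (π : ℕ → Term) : ℕ → Term :=
  fun y => if y ∈ R.exist then Term.var (ν R (restrict π R.frontier) y) else π y

/-- One breadth-first semi-oblivious chase step. -/
def chaseStep (ν : Rule → (ℕ → Term) → ℕ → ℕ) (L : List Rule) (S : Set Atom) : Set Atom :=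
  S ∪ {a | ∃ R ∈ L, ∃ π : ℕ → Term, isHom π R.body S ∧ a ∈ substSet (safeSub ν R π) R.head}

/-- The breadth-first semi-oblivious chase. -/
def chaseF (ν : Rule → (ℕ → Term) → ℕ → ℕ) (L : List Rule) (I : Set Atom) : ℕ → Set Atom
  | 0 => I
  | k + 1 => chaseStep ν L (chaseF ν L I k)

def chaseInf (ν : Rule → (ℕ → Term) → ℕ → ℕ) (L : List Rule) (I : Set Atom) : Set Atom :=
  ⋃ k, chaseF ν L I k

/-- `L'` parallelises `L`. -/
def Parallelises (L' L : List Rule) : Prop :=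
  ∀ ν ν', SONaming L ν → SONaming L' ν' → ∀ I, IsInstance I →
    (∃ σ, isInjHom σ (chaseInf ν L I) (chaseF ν' L' I 1)) ∧
    (∃ σ, isHom σ (chaseF ν' L' I 1) (chaseInf ν L I))

def Parallelisable (L : List Rule) : Prop := ∃ L', WfList L' ∧ Parallelises L' L

/-- Boundedness of the semi-oblivious chase, uniformly over all instances. -/
def Bounded (L : List Rule) : Prop :=
  ∃ k, ∀ ν, SONaming L ν → ∀ I, IsInstance I → chaseF ν L I k = chaseInf ν L I

def ChaseFinite (L : List Rule) : Prop :=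
  ∀ ν, SONaming L ν → ∀ I, IsInstance I → ∃ k, chaseF ν L I k = chaseInf ν L I

/-- Two atoms are `T`-linked if they share a term of `T`. -/
def linked (T : Set Term) (a b : Atom) : Prop := ∃ t ∈ T, t ∈ a.terms ∧ t ∈ b.terms

/-- Connectivity in `S` by a path of atoms where consecutive atoms share a term of `T`. -/
def connectedIn (S : Set Atom) (T : Set Term) (a b : Atom) : Prop :=
  a ∈ S ∧ b ∈ S ∧ Relation.ReflTransGen (fun x y => x ∈ S ∧ y ∈ S ∧ linked T x y) a b

/-- `P` is closed in `S` w.r.t. `T`-linkedness. -/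
def closedIn (S : Set Atom) (T : Set Term) (P : Set Atom) : Prop :=
  ∀ a ∈ S, ∀ b ∈ P, linked T a b → a ∈ P

/-- A piece of `S` w.r.t. `T`: a non-empty subset closed under `T`-linkedness and minimal such. -/
def IsPiece (S : Set Atom) (T : Set Term) (P : Set Atom) : Prop :=
  P.Nonempty ∧ P ⊆ S ∧ closedIn S T P ∧
  ∀ P', P' ⊆ P → P'.Nonempty → closedIn S T P' → P' = P

/-- A single-piece rule: its head is a piece of itself w.r.t. its existential variables. -/
def SinglePiece (R : Rule) : Prop := IsPiece R.head (Term.var '' R.exist) R.head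

/-- The rule used at step `k` of a derivation. -/
def ruleAt (L : List Rule) (r : ℕ → ℕ) (k : ℕ) : Rule := L.getD (r k) ⟨∅, ∅⟩

/-- The set of atoms produced by the `k`-th rule application of a derivation. -/
def producedAt (ν : Rule → (ℕ → Term) → ℕ → ℕ) (L : List Rule) (r : ℕ → ℕ)
    (π : ℕ → ℕ → Term) (k : ℕ) : Set Atom :=
  substSet (safeSub ν (ruleAt L r k) (π k)) (ruleAt L r k).head

def derivState (ν : Rule → (ℕ → Term) → ℕ → ℕ) (L : List Rule) (I : Set Atom)
    (r : ℕ → ℕ) (π : ℕ → ℕ → Term) : ℕ → Set Atom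
  | 0 => I
  | k + 1 => derivState ν L I r π k ∪ producedAt ν L r π k

/-- An `R`-derivation of length `n` from `I`: each step applies a trigger. -/
def IsDeriv (ν : Rule → (ℕ → Term) → ℕ → ℕ) (L : List Rule) (I : Set Atom) (n : ℕ)
    (r : ℕ → ℕ) (π : ℕ → ℕ → Term) : Prop :=
  ∀ k < n, r k < L.length ∧ isHom (π k) (ruleAt L r k).body (derivState ν L I r π k)

/-- A pieceful derivation: each trigger maps its rule's frontier entirely into the terms of
the initial instance, or entirely into the terms produced by a single earlier application. -/
def PiecefulDeriv (ν : Rule → (ℕ → Term) → ℕ → ℕ) (L : List Rule) (I : Set Atom) (n : ℕ)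
    (r : ℕ → ℕ) (π : ℕ → ℕ → Term) : Prop :=
  ∀ k < n, (∀ x ∈ (ruleAt L r k).frontier, π k x ∈ termsOf I) ∨
    ∃ j < k, ∀ x ∈ (ruleAt L r k).frontier, π k x ∈ termsOf (producedAt ν L r π j)

/-- A pieceful rule set: every derivation from every instance is pieceful. -/
def PiecefulSet (L : List Rule) : Prop :=
  ∀ ν, SONaming L ν → ∀ I, IsInstance I → ∀ n r π,
    IsDeriv ν L I n r π → PiecefulDeriv ν L I n r π

/-- First-order structures for the semantics of rules. -/
structure Struct where
  D : Type
  nonempty : Nonempty D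
  interp : ℕ → List D → Prop
  cinterp : ℕ → D

def evalT (M : Struct) (v : ℕ → M.D) : Term → M.D
  | .const c => M.cinterp c
  | .var x => v x

def holdsA (M : Struct) (v : ℕ → M.D) (a : Atom) : Prop :=
  M.interp a.pred (a.args.map (evalT M v))

/-- Satisfaction of (the universal-existential closure of) a rule in a structure. -/
def satRule (M : Struct) (R : Rule) : Prop :=
  ∀ v : ℕ → M.D, (∀ a ∈ R.body, holdsA M v a) →
    ∃ w : ℕ → M.D, (∀ x ∈ varsOf R.body, w x = v x) ∧ ∀ a ∈ R.head, holdsA M w a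

/-- Separating variables of `S' ⊆ S`: variables occurring both in `S'` and in `S \ S'`. -/
def sepVars (S' S : Set Atom) : Set ℕ := varsOf S' ∩ varsOf (S \ S')

/-- A piece-unifier `(S', H', u)` of a set of atoms `S` with a rule `R`. -/
def IsPieceUnifier (S : Set Atom) (R : Rule) (S' H' : Set Atom) (u : ℕ → Term) : Prop :=
  Disjoint (varsOf S) (varsOf (R.body ∪ R.head)) ∧
  S'.Nonempty ∧ S' ⊆ S ∧ H' ⊆ R.head ∧
  (∀ x, x ∉ R.frontier ∪ varsOf S' → u x = Term.var x) ∧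
  (∀ x ∈ R.frontier ∪ varsOf S', ∃ y ∈ varsOf R.head, u x = Term.var y) ∧
  (∀ x ∈ R.frontier, ∃ y ∈ R.frontier, u x = Term.var y) ∧
  (∀ x ∈ sepVars S' S, ∃ y ∈ R.frontier, u x = Term.var y) ∧
  substSet u S' = substSet u H'

/-- The existential stability property of a piece-unifier of `body R2` with `R1`. -/
def StableUnifier (R2 R1 : Rule) (B2' : Set Atom) (u : ℕ → Term) : Prop :=
  (∀ x ∈ R2.frontier, u x ∉ Term.var '' R1.exist) ∨ R2.frontier ⊆ varsOf B2'

/-- The existential composition `R2 ∘_μ R1` w.r.t. a piece-unifier `μ = (B2', H1', u)`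
of `body R2` with `R1`. -/
def compose (R2 R1 : Rule) (B2' : Set Atom) (u : ℕ → Term) : Rule :=
  if ∀ x ∈ R2.frontier, u x ∉ Term.var '' R1.exist then
    ⟨substSet u R1.body ∪ substSet u (R2.body \ B2'), substSet u R2.head⟩
  else
    ⟨substSet u R1.body ∪ substSet u (R2.body \ B2'),
     substSet u R1.head ∪ substSet u R2.head⟩

/-- The closure `R*` of a rule set under existential composition. -/
inductive InClosure (𝒮 : Set Rule) : Rule → Prop
  | base {R : Rule} : R ∈ 𝒮 → InClosure 𝒮 R
  | comp {Ri Rj : Rule} {B' H' : Set Atom} {u : ℕ → Term} :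
      InClosure 𝒮 Ri → InClosure 𝒮 Rj →
      IsPieceUnifier Ri.body Rj B' H' u → InClosure 𝒮 (compose Ri Rj B' u)

def ruleSet (L : List Rule) : Set Rule := {R | R ∈ L}

/-- The stability property for a (possibly infinite) rule set. -/
def StableSet (𝒮 : Set Rule) : Prop :=
  ∀ R1 ∈ 𝒮, ∀ R2 ∈ 𝒮, ∀ B2' H1' u,
    IsPieceUnifier R2.body R1 B2' H1' u → StableUnifier R2 R1 B2' u

/-- `J` is a result of one breadth-first chase step of a (possibly infinite) rule set on `I`,
with fresh pairwise-compatible nulls (semi-oblivious naming). -/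
def OneStepResult (𝒮 : Set Rule) (I J : Set Atom) : Prop :=
  ∃ ν : Rule → (ℕ → Term) → ℕ → ℕ,
    (∀ R ∈ 𝒮, ∀ f x, Term.var (ν R f x) ∉ termsOf I) ∧
    (∀ R ∈ 𝒮, ∀ R' ∈ 𝒮, ∀ f f' x x', ν R f x = ν R' f' x' →
        R = R' ∧ restrict f R.frontier = restrict f' R'.frontier ∧ x = x') ∧
    J = I ∪ {a | ∃ R ∈ 𝒮, ∃ π : ℕ → Term, isHom π R.body I ∧
                  a ∈ substSet (safeSub ν R π) R.head}

/-- `I, R ⊨ q` for a Boolean conjunctive query `q` (a set of atoms). -/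
def Entails (L : List Rule) (I q : Set Atom) : Prop :=
  ∀ ν, SONaming L ν → ∃ k σ, isHom σ q (chaseF ν L I k)

/-- The null `t` occurs in at least `n` atoms of `S`. -/
def occursInAtLeast (S : Set Atom) (t : Term) (n : ℕ) : Prop :=
  ∃ F : Set Atom, F ⊆ {a | a ∈ S ∧ t ∈ a.terms} ∧ F.Finite ∧ n ≤ F.ncard

def FrontierGuarded (R : Rule) : Prop := ∃ a ∈ R.body, R.frontier ⊆ a.vars

def IsDatalog (R : Rule) : Prop := R.exist = ∅ ∧ ∃ a, R.head = {a}

end ER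
namespace ER

lemma evalT_subst (M : Struct) (v : ℕ → M.D) (σ : ℕ → Term) (t : Term) :
    evalT M v (Term.subst σ t) = evalT M (fun x => evalT M v (σ x)) t := by
  cases t <;> rfl

lemma holdsA_subst (M : Struct) (v : ℕ → M.D) (σ : ℕ → Term) (a : Atom) :
    holdsA M v (Atom.subst σ a) = holdsA M (fun x => evalT M v (σ x)) a := by
  unfold holdsA Atom.subst
  simp only [List.map_map]
  have hf : evalT M v ∘ Term.subst σ = evalT M (fun x => evalT M v (σ x)) :=
    funext (evalT_subst M v σ)
  rw [hf]

lemma holdsA_congr (M : Struct) (v v' : ℕ → M.D) (a : Atom)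
    (h : ∀ x ∈ a.vars, v x = v' x) : holdsA M v a = holdsA M v' a := by
  unfold holdsA
  congr 1
  apply List.map_congr_left
  intro t ht
  cases t with
  | const c => rfl
  | var x => exact h x ht

lemma mem_varsOf {S : Set Atom} {x : ℕ} : x ∈ varsOf S ↔ ∃ a ∈ S, x ∈ a.vars := by
  simp [varsOf]

lemma mem_varsOf_of {S : Set Atom} {a : Atom} {x : ℕ} (ha : a ∈ S) (hx : x ∈ a.vars) :
    x ∈ varsOf S := mem_varsOf.2 ⟨a, ha, hx⟩

lemma varsOf_union {S T : Set Atom} : varsOf (S ∪ T) = varsOf S ∪ varsOf T := by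
  unfold varsOf
  exact Set.biUnion_union S T _

lemma vars_subst {σ : ℕ → Term} {a : Atom} {z : ℕ} (h : z ∈ (Atom.subst σ a).vars) :
    ∃ x ∈ a.vars, σ x = Term.var z := by
  simp only [Atom.vars, Atom.subst, Set.mem_setOf_eq, List.mem_map] at h
  obtain ⟨t, ht, hts⟩ := h
  cases t with
  | const c => simp [Term.subst] at hts
  | var x => exact ⟨x, ht, hts⟩

/-- if some frontier variable of `R2` is unified with an existential variable
of `R1`, the existential composition `u(B1) ∪ u(B2 \\ B2') → ∃ (u(H1) ∪ u(H2))` is entailed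
by `{R1, R2}`. -/
theorem composition_sound_case2 (R1 R2 : Rule) (h1 : WfRule R1) (h2 : WfRule R2)
    (hs1 : SinglePiece R1) (hs2 : SinglePiece R2)
    (hdisj : Disjoint (varsOf (R1.body ∪ R1.head)) (varsOf (R2.body ∪ R2.head)))
    (B2' H1' : Set Atom) (u : ℕ → Term)
    (hu : IsPieceUnifier R2.body R1 B2' H1' u)
    (hc : ∃ x ∈ R2.frontier, u x ∈ Term.var '' R1.exist) :
    ∀ M : Struct, satRule M R1 → satRule M R2 →
      satRule M ⟨substSet u R1.body ∪ substSet u (R2.body \ B2'),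
                 substSet u R1.head ∪ substSet u R2.head⟩ := by
  intro M hM1 hM2
  obtain ⟨_, _, hB2sub, hH1sub, hid, hrange, hfr, hsep, hunif⟩ := hu
  have hD : ∀ z, (z ∈ varsOf R1.body ∨ z ∈ varsOf R1.head) →
      (z ∈ varsOf R2.body ∨ z ∈ varsOf R2.head) → False := by
    intro z h1 h2
    exact Set.disjoint_left.mp hdisj
      (show z ∈ varsOf (R1.body ∪ R1.head) by rw [varsOf_union]; exact h1)
      (by rw [varsOf_union]; exact h2)
  -- image of u on B2' vars stays out of R2's variables, etc.
  have hB2v : ∀ {x : ℕ}, x ∈ varsOf B2' → x ∈ varsOf R2.body := by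
    intro x hx
    obtain ⟨a, ha, hxa⟩ := mem_varsOf.1 hx
    exact mem_varsOf_of (hB2sub ha) hxa
  intro v hv
  have hB1 : ∀ a ∈ R1.body, holdsA M (fun x => evalT M v (u x)) a := by
    intro a ha
    have h := hv (Atom.subst u a) (Set.mem_union_left _ ⟨a, ha, rfl⟩)
    rwa [holdsA_subst] at h
  obtain ⟨w1, hw1agree, hw1head⟩ := hM1 _ hB1
  -- the intermediate valuation: existentials of R1 get w1's values, the rest keeps v
  have hH1subst : ∀ b ∈ R1.head,
      holdsA M (fun z => if z ∈ R1.exist then w1 z else v z) (Atom.subst u b) := by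
    intro b hb
    rw [holdsA_subst,
      holdsA_congr M (fun x => evalT M (fun z => if z ∈ R1.exist then w1 z else v z) (u x))
        w1 b ?_]
    · exact hw1head b hb
    intro x hx
    have hxh : x ∈ varsOf R1.head := mem_varsOf_of hb hx
    by_cases hxb : x ∈ varsOf R1.body
    · obtain ⟨y, hy, hux⟩ := hfr x ⟨hxb, hxh⟩
      have hyne : y ∉ R1.exist := fun h => h.2 hy.1
      show evalT M _ (u x) = w1 x
      rw [hux, hw1agree x hxb]
      show (if y ∈ R1.exist then w1 y else v y) = evalT M v (u x)
      rw [if_neg hyne, hux]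
      rfl
    · have hxe : x ∈ R1.exist := ⟨hxh, hxb⟩
      have hux : u x = Term.var x := by
        apply hid
        rintro (h | h)
        · exact hxb h.1
        · exact hD x (Or.inr hxh) (Or.inl (hB2v h))
      show evalT M _ (u x) = w1 x
      rw [hux]
      show (if x ∈ R1.exist then w1 x else v x) = w1 x
      rw [if_pos hxe]
  -- the valuation for R2's body
  have hB2 : ∀ a ∈ R2.body, holdsA M
      (fun x => evalT M (fun z => if z ∈ R1.exist then w1 z else v z) (u x)) a := by
    intro a ha
    by_cases haB : a ∈ B2'
    · have hmem : Atom.subst u a ∈ substSet u H1' := hunif ▸ ⟨a, haB, rfl⟩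
      obtain ⟨b, hb, heq⟩ := hmem
      have h := hH1subst b (hH1sub hb)
      rw [heq, holdsA_subst] at h
      exact h
    · have hva := hv (Atom.subst u a) (Set.mem_union_right _ ⟨a, ⟨ha, haB⟩, rfl⟩)
      rw [holdsA_subst] at hva
      rw [holdsA_congr M _ (fun x => evalT M v (u x)) a ?_]
      · exact hva
      intro x hx
      have hx2 : x ∈ varsOf (R2.body \ B2') := mem_varsOf_of (⟨ha, haB⟩ : a ∈ R2.body \ B2') hx
      have hxb2 : x ∈ varsOf R2.body := mem_varsOf_of ha hx
      have hkey : ∃ y, u x = Term.var y ∧ y ∉ R1.exist := by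
        by_cases hxB : x ∈ varsOf B2'
        · obtain ⟨y, hy, hux⟩ := hsep x ⟨hxB, hx2⟩
          exact ⟨y, hux, fun h => h.2 hy.1⟩
        · refine ⟨x, hid x ?_, fun h => hD x (Or.inr h.1) (Or.inl hxb2)⟩
          rintro (h | h)
          · exact hD x (Or.inl h.1) (Or.inl hxb2)
          · exact hxB h
      obtain ⟨y, hux, hyne⟩ := hkey
      show evalT M _ (u x) = evalT M v (u x)
      rw [hux]
      show (if y ∈ R1.exist then w1 y else v y) = v y
      rw [if_neg hyne]
  obtain ⟨w2, hw2agree, hw2head⟩ := hM2 _ hB2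
  -- final valuation
  refine ⟨fun z => if z ∈ R2.exist then w2 z
            else if z ∈ R1.exist then w1 z else v z, ?_, ?_⟩
  · -- agrees with v on the body variables of the composed rule
    intro z hz
    have hz' : z ∈ varsOf (substSet u R1.body) ∪ varsOf (substSet u (R2.body \ B2')) := by
      rw [← varsOf_union]; exact hz
    have hzO : z ∈ varsOf R1.body ∨ z ∈ varsOf R2.body := by
      rcases hz' with hz1 | hz2
      · obtain ⟨c, ⟨a, ha, rfl⟩, hzc⟩ := mem_varsOf.1 hz1
        obtain ⟨x, hxa, hux⟩ := vars_subst hzc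
        have hxb : x ∈ varsOf R1.body := mem_varsOf_of ha hxa
        by_cases hxf : x ∈ R1.frontier
        · obtain ⟨y, hy, huy⟩ := hfr x hxf
          rw [huy] at hux
          cases hux
          exact Or.inl hy.1
        · have : u x = Term.var x := by
            apply hid
            rintro (h | h)
            · exact hxf h
            · exact hD x (Or.inl hxb) (Or.inl (hB2v h))
          rw [this] at hux
          cases hux
          exact Or.inl hxb
      · obtain ⟨c, ⟨a, ha, rfl⟩, hzc⟩ := mem_varsOf.1 hz2
        obtain ⟨x, hxa, hux⟩ := vars_subst hzc
        have hxb : x ∈ varsOf R2.body := mem_varsOf_of ha.1 hxa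
        by_cases hxB : x ∈ varsOf B2'
        · obtain ⟨y, hy, huy⟩ := hsep x ⟨hxB, mem_varsOf_of ha hxa⟩
          rw [huy] at hux
          cases hux
          exact Or.inl hy.1
        · have : u x = Term.var x := by
            apply hid
            rintro (h | h)
            · exact hD x (Or.inl h.1) (Or.inl hxb)
            · exact hxB h
          rw [this] at hux
          cases hux
          exact Or.inr hxb
    have hz2e : z ∉ R2.exist := by
      rcases hzO with h | h
      · exact fun he => hD z (Or.inl h) (Or.inr he.1)
      · exact fun he => he.2 h
    have hz1e : z ∉ R1.exist := by
      rcases hzO with h | h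
      · exact fun he => he.2 h
      · exact fun he => hD z (Or.inr he.1) (Or.inl h)
    show (if z ∈ R2.exist then w2 z else if z ∈ R1.exist then w1 z else v z) = v z
    rw [if_neg hz2e, if_neg hz1e]
  · -- head atoms hold
    intro c hc'
    rcases hc' with ⟨b, hb, rfl⟩ | ⟨b, hb, rfl⟩
    · -- from R1's head
      have h := hH1subst b hb
      rw [holdsA_congr M _ (fun z => if z ∈ R1.exist then w1 z else v z) (Atom.subst u b) ?_]
      · exact h
      intro z hz
      obtain ⟨x, hxb, hux⟩ := vars_subst hz
      have hxh : x ∈ varsOf R1.head := mem_varsOf_of hb hxb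
      have hz1 : z ∈ varsOf R1.body ∨ z ∈ varsOf R1.head := by
        by_cases hxf : x ∈ R1.frontier
        · obtain ⟨y, hy, huy⟩ := hfr x hxf
          rw [huy] at hux; cases hux; exact Or.inl hy.1
        · have : u x = Term.var x := by
            apply hid
            rintro (h | h)
            · exact hxf h
            · exact hD x (Or.inr hxh) (Or.inl (hB2v h))
          rw [this] at hux; cases hux; exact Or.inr hxh
      have hz2e : z ∉ R2.exist := fun he => hD z hz1 (Or.inr he.1)
      show (if z ∈ R2.exist then w2 z else _) = _
      rw [if_neg hz2e]
    · -- from R2's head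
      rw [holdsA_subst,
        holdsA_congr M _ w2 b ?_]
      · exact hw2head b hb
      intro x hx
      have hxh : x ∈ varsOf R2.head := mem_varsOf_of hb hx
      by_cases hxb : x ∈ varsOf R2.body
      · have hw2x : w2 x = evalT M (fun z => if z ∈ R1.exist then w1 z else v z) (u x) :=
          hw2agree x hxb
        have hkey : ∃ y, u x = Term.var y ∧ y ∉ R2.exist := by
          by_cases hxB : x ∈ varsOf B2'
          · obtain ⟨y, hy, huy⟩ := hrange x (Or.inr hxB)
            exact ⟨y, huy, fun he => hD y (Or.inr hy) (Or.inr he.1)⟩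
          · refine ⟨x, hid x ?_, fun he => he.2 hxb⟩
            rintro (h | h)
            · exact hD x (Or.inl h.1) (Or.inl hxb)
            · exact hxB h
        obtain ⟨y, huy, hyne⟩ := hkey
        show evalT M _ (u x) = w2 x
        rw [hw2x, huy]
        show (if y ∈ R2.exist then w2 y else if y ∈ R1.exist then w1 y else v y)
          = (if y ∈ R1.exist then w1 y else v y)
        rw [if_neg hyne]
      · have hxe : x ∈ R2.exist := ⟨hxh, hxb⟩
        have hux : u x = Term.var x := by
          apply hid
          rintro (h | h)
          · exact hD x (Or.inl h.1) (Or.inr hxh)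
          · exact hxb (hB2v h)
        show evalT M _ (u x) = w2 x
        rw [hux]
        show (if x ∈ R2.exist then w2 x else _) = w2 x
        rw [if_pos hxe]

end ER
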